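/- arXiv:math/0305336 — 3 statements merged into one kernel-verified Lean document; each statement's English description precedes it below -/
import Mathlib

section
/- Let 𝒜 be a central hyperplane arrangement in ℝⁿ with base region B, let (J,M) be a subcritical pair in 𝒫(𝒜,B), and let H^J denote the hyperplane separating J from the unique region J_* covered by J. If a hyperplane H ∈ 𝒜 satisfies H ∉ S(J) and H ∈ S(M), then H^J is basic in the rank-two subarrangement consisting of all hyperplanes of 𝒜 containing H ∩ H^J. -/
open scoped RealInnerProductSpace

noncomputable section

variable {n : ℕ}

/-- A (linear) hyperplane in ℝⁿ: the zero set of a nonzero linear functional,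
expressed via the inner product with a nonzero normal vector. -/
def IsHyperplane (H : Set (EuclideanSpace ℝ (Fin n))) : Prop :=
  ∃ v : EuclideanSpace ℝ (Fin n), v ≠ 0 ∧ H = {x | ⟪v, x⟫ = 0}

/-- A central hyperplane arrangement: a finite nonempty collection of linear hyperplanes. -/
def IsCentralArrangement (A : Set (Set (EuclideanSpace ℝ (Fin n)))) : Prop :=
  A.Finite ∧ A.Nonempty ∧ ∀ H ∈ A, IsHyperplane H

/-- The complement of the union of the hyperplanes of the arrangement. -/
def arrComplement (A : Set (Set (EuclideanSpace ℝ (Fin n)))) : Set (EuclideanSpace ℝ (Fin n)) :=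
  (⋃ H ∈ A, H)ᶜ

/-- A region of the arrangement: the closure of a connected component of the complement
of the union of the hyperplanes. -/
def IsRegion (A : Set (Set (EuclideanSpace ℝ (Fin n)))) (R : Set (EuclideanSpace ℝ (Fin n))) :
    Prop :=
  ∃ x ∈ arrComplement A, R = closure (connectedComponentIn (arrComplement A) x)

/-- The hyperplane `H` separates the region `R` from the region `B`: their interiors lie on
strictly opposite sides of `H`. -/
def Separates (H R B : Set (EuclideanSpace ℝ (Fin n))) : Prop :=
  ∃ v : EuclideanSpace ℝ (Fin n), v ≠ 0 ∧ H = {x | ⟪v, x⟫ = 0} ∧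
    (∀ x ∈ interior R, 0 < ⟪v, x⟫) ∧ (∀ x ∈ interior B, ⟪v, x⟫ < 0)

/-- S(R): the set of hyperplanes of `A` separating `R` from the base region `B`. -/
def sepSet (A : Set (Set (EuclideanSpace ℝ (Fin n)))) (B R : Set (EuclideanSpace ℝ (Fin n))) :
    Set (Set (EuclideanSpace ℝ (Fin n))) :=
  {H | H ∈ A ∧ Separates H R B}

/-- The order of the poset of regions 𝒫(𝒜,B): containment of separating sets. -/
def regLE (A : Set (Set (EuclideanSpace ℝ (Fin n)))) (B R₁ R₂ : Set (EuclideanSpace ℝ (Fin n))) :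
    Prop :=
  sepSet A B R₁ ⊆ sepSet A B R₂

/-- Strict order on regions. -/
def regLT (A : Set (Set (EuclideanSpace ℝ (Fin n)))) (B R₁ R₂ : Set (EuclideanSpace ℝ (Fin n))) :
    Prop :=
  regLE A B R₁ R₂ ∧ ¬ regLE A B R₂ R₁

/-- The order dimension of the poset of regions 𝒫(𝒜,B): the smallest `d` such that it embeds
as an induced subposet of ℝᵈ with the componentwise order. -/
def regionOrderDim (A : Set (Set (EuclideanSpace ℝ (Fin n))))
    (B : Set (EuclideanSpace ℝ (Fin n))) : ℕ :=
  sInf {d : ℕ | ∃ f : {R : Set (EuclideanSpace ℝ (Fin n)) // IsRegion A R} → (Fin d → ℝ),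
    ∀ R₁ R₂, regLE A B R₁.1 R₂.1 ↔ ∀ i, f R₁ i ≤ f R₂ i}

/-- The rank-two subarrangement of `A` consisting of all hyperplanes of `A`
containing `H₁ ∩ H₂`. -/
def pencil (A : Set (Set (EuclideanSpace ℝ (Fin n)))) (H₁ H₂ : Set (EuclideanSpace ℝ (Fin n))) :
    Set (Set (EuclideanSpace ℝ (Fin n))) :=
  {H | H ∈ A ∧ H₁ ∩ H₂ ⊆ H}

/-- `H` is basic in the subarrangement `A'` relative to the base region `B`:
`H ∈ A'` and `H` bounds (meets in codimension one) the region `B'` of `A'` containing `B`. -/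
def IsBasicIn (A' : Set (Set (EuclideanSpace ℝ (Fin n)))) (B H : Set (EuclideanSpace ℝ (Fin n))) :
    Prop :=
  H ∈ A' ∧ ∃ B', IsRegion A' B' ∧ B ⊆ B' ∧
    Submodule.span ℝ (H ∩ B') = Submodule.span ℝ H

/-- The edge relation of the basic digraph 𝒟(𝒜,B): `H₁ → H₂` whenever `H₁` is basic in the
rank-two subarrangement consisting of all hyperplanes of `A` containing `H₁ ∩ H₂`. -/
def BasicEdge (A : Set (Set (EuclideanSpace ℝ (Fin n))))
    (B H₁ H₂ : Set (EuclideanSpace ℝ (Fin n))) : Prop :=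
  H₁ ∈ A ∧ H₂ ∈ A ∧ H₁ ≠ H₂ ∧ IsBasicIn (pencil A H₁ H₂) B H₁

/-- The hyperplane `H` with the cutting loci removed: for each rank-two subarrangement
containing `H` in which `H` is not basic, the codimension-two intersection is removed. -/
def shardCut (A : Set (Set (EuclideanSpace ℝ (Fin n)))) (B H : Set (EuclideanSpace ℝ (Fin n))) :
    Set (EuclideanSpace ℝ (Fin n)) :=
  H \ ⋃ H' ∈ {H' | H' ∈ A ∧ H' ≠ H ∧ ¬ IsBasicIn (pencil A H H') B H}, (H ∩ H')

/-- `Sg` is a shard of `(A,B)` contained in the hyperplane `H`: a connected component of `H`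
with the cutting loci removed. -/
def IsShardOf (A : Set (Set (EuclideanSpace ℝ (Fin n))))
    (B H Sg : Set (EuclideanSpace ℝ (Fin n))) : Prop :=
  H ∈ A ∧ ∃ x ∈ shardCut A B H, Sg = connectedComponentIn (shardCut A B H) x

/-- U(Σ): the regions meeting the shard `Sg` in codimension one whose separating set
contains the hyperplane `H` containing `Sg`. -/
def upperRegions (A : Set (Set (EuclideanSpace ℝ (Fin n))))
    (B H Sg : Set (EuclideanSpace ℝ (Fin n))) : Set (Set (EuclideanSpace ℝ (Fin n))) :=
  {R | IsRegion A R ∧ Submodule.span ℝ (R ∩ Sg) = Submodule.span ℝ H ∧ H ∈ sepSet A B R}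

/-- L(Σ): the regions meeting the shard `Sg` in codimension one whose separating set
does not contain the hyperplane `H` containing `Sg`. -/
def lowerRegions (A : Set (Set (EuclideanSpace ℝ (Fin n))))
    (B H Sg : Set (EuclideanSpace ℝ (Fin n))) : Set (Set (EuclideanSpace ℝ (Fin n))) :=
  {R | IsRegion A R ∧ Submodule.span ℝ (R ∩ Sg) = Submodule.span ℝ H ∧ H ∉ sepSet A B R}

/-- `J` is a minimal element of U(Σ), as a subposet of 𝒫(𝒜,B). -/
def MinimalInU (A : Set (Set (EuclideanSpace ℝ (Fin n))))
    (B H Sg J : Set (EuclideanSpace ℝ (Fin n))) : Prop :=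
  J ∈ upperRegions A B H Sg ∧
    ∀ R ∈ upperRegions A B H Sg, regLE A B R J → regLE A B J R

/-- `M` is a maximal element of L(Σ), as a subposet of 𝒫(𝒜,B). -/
def MaximalInL (A : Set (Set (EuclideanSpace ℝ (Fin n))))
    (B H Sg M : Set (EuclideanSpace ℝ (Fin n))) : Prop :=
  M ∈ lowerRegions A B H Sg ∧
    ∀ R ∈ lowerRegions A B H Sg, regLE A B M R → regLE A B R M

/-- `J` covers `Jst` in the poset of regions 𝒫(𝒜,B). -/
def CoversReg (A : Set (Set (EuclideanSpace ℝ (Fin n))))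
    (B J Jst : Set (EuclideanSpace ℝ (Fin n))) : Prop :=
  IsRegion A Jst ∧ regLT A B Jst J ∧
    ∀ R, IsRegion A R → regLT A B Jst R → regLT A B R J → False

/-- `R` is an upper bound of the set `X` of regions in 𝒫(𝒜,B). -/
def regIsUB (A : Set (Set (EuclideanSpace ℝ (Fin n)))) (B : Set (EuclideanSpace ℝ (Fin n)))
    (X : Set (Set (EuclideanSpace ℝ (Fin n)))) (R : Set (EuclideanSpace ℝ (Fin n))) : Prop :=
  ∀ R' ∈ X, regLE A B R' R

/-- `R` is the least upper bound of the set `X` of regions in 𝒫(𝒜,B). -/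
def regIsLUB (A : Set (Set (EuclideanSpace ℝ (Fin n)))) (B : Set (EuclideanSpace ℝ (Fin n)))
    (X : Set (Set (EuclideanSpace ℝ (Fin n)))) (R : Set (EuclideanSpace ℝ (Fin n))) : Prop :=
  regIsUB A B X R ∧ ∀ R', IsRegion A R' → regIsUB A B X R' → regLE A B R R'

/-- `R` is a lower bound of the set `X` of regions in 𝒫(𝒜,B). -/
def regIsLB (A : Set (Set (EuclideanSpace ℝ (Fin n)))) (B : Set (EuclideanSpace ℝ (Fin n)))
    (X : Set (Set (EuclideanSpace ℝ (Fin n)))) (R : Set (EuclideanSpace ℝ (Fin n))) : Prop :=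
  ∀ R' ∈ X, regLE A B R R'

/-- `R` is the greatest lower bound of the set `X` of regions in 𝒫(𝒜,B). -/
def regIsGLB (A : Set (Set (EuclideanSpace ℝ (Fin n)))) (B : Set (EuclideanSpace ℝ (Fin n)))
    (X : Set (Set (EuclideanSpace ℝ (Fin n)))) (R : Set (EuclideanSpace ℝ (Fin n))) : Prop :=
  regIsLB A B X R ∧ ∀ R', IsRegion A R' → regIsLB A B X R' → regLE A B R' R

/-- `J` is join-irreducible in 𝒫(𝒜,B): there is no set `X` of regions with `J ∉ X`
whose least upper bound is `J`. -/
def JoinIrredReg (A : Set (Set (EuclideanSpace ℝ (Fin n))))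
    (B J : Set (EuclideanSpace ℝ (Fin n))) : Prop :=
  IsRegion A J ∧ ¬ ∃ X : Set (Set (EuclideanSpace ℝ (Fin n))),
    (∀ R ∈ X, IsRegion A R) ∧ J ∉ X ∧ regIsLUB A B X J

/-- `M` is meet-irreducible in 𝒫(𝒜,B): there is no set `X` of regions with `M ∉ X`
whose greatest lower bound is `M`. -/
def MeetIrredReg (A : Set (Set (EuclideanSpace ℝ (Fin n))))
    (B M : Set (EuclideanSpace ℝ (Fin n))) : Prop :=
  IsRegion A M ∧ ¬ ∃ X : Set (Set (EuclideanSpace ℝ (Fin n))),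
    (∀ R ∈ X, IsRegion A R) ∧ M ∉ X ∧ regIsGLB A B X M

/-- `(J,M)` is a subcritical pair in the poset of regions 𝒫(𝒜,B). -/
def SubcritReg (A : Set (Set (EuclideanSpace ℝ (Fin n))))
    (B J M : Set (EuclideanSpace ℝ (Fin n))) : Prop :=
  IsRegion A J ∧ IsRegion A M ∧ ¬ regLE A B J M ∧
    (∀ X, IsRegion A X → regLT A B X J → regLE A B X M) ∧
    (∀ X, IsRegion A X → regLT A B M X → regLE A B J X)


namespace ShardArrowAux

local notation "E" => EuclideanSpace ℝ (Fin n)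

/-! ### Elementary real sign lemmas -/

lemma sign_neg_of_neg_pos {x y z : ℝ} (h1 : x * y < 0) (h2 : 0 < z * y) : x * z < 0 := by
  nlinarith [mul_pos (neg_pos.mpr h1) h2, sq_nonneg y]

lemma sign_pos_of_neg_neg {x y z : ℝ} (h1 : x * y < 0) (h2 : z * y < 0) : 0 < x * z := by
  nlinarith [mul_pos (neg_pos.mpr h1) (neg_pos.mpr h2), sq_nonneg y]

lemma sign_pos_of_pos_pos {x y z : ℝ} (h1 : 0 < x * y) (h2 : 0 < z * y) : 0 < x * z := by
  nlinarith [mul_pos h1 h2, sq_nonneg y]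

lemma combo_zero {x y : ℝ} (h : x - y ≠ 0) : (1 - x / (x - y)) * x + x / (x - y) * y = 0 := by
  field_simp
  ring

/-! ### Normal vectors -/

/-- Two nonzero normals of the same hyperplane are proportional. -/
lemma normal_proportional {v w : EuclideanSpace ℝ (Fin n)} (hv : v ≠ 0)
    (h : {x : EuclideanSpace ℝ (Fin n) | ⟪v, x⟫ = 0} = {x | ⟪w, x⟫ = 0}) :
    ∃ c : ℝ, w = c • v := by
  have hvv : (⟪v, v⟫ : ℝ) ≠ 0 := inner_self_ne_zero.mpr hv
  refine ⟨⟪v, w⟫ / ⟪v, v⟫, ?_⟩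
  set c : ℝ := ⟪v, w⟫ / ⟪v, v⟫ with hc
  have h1 : ⟪v, w - c • v⟫ = (0 : ℝ) := by
    rw [inner_sub_right, real_inner_smul_right, hc, div_mul_cancel₀ _ hvv, sub_self]
  have h2 : ⟪w, w - c • v⟫ = (0 : ℝ) := (Set.ext_iff.mp h (w - c • v)).mp h1
  have h3 : ⟪w - c • v, w - c • v⟫ = (0 : ℝ) := by
    rw [inner_sub_left, real_inner_smul_left, h1, h2]; ring
  have h4 : w - c • v = 0 := inner_self_eq_zero.mp h3
  have : w = c • v := by linear_combination (norm := abel) h4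
  simpa [hc] using this

/-- If a normal's hyperplane contains the intersection of two others, it is in their span. -/
lemma normal_mem_span_pair {v w u : EuclideanSpace ℝ (Fin n)}
    (h : {x : EuclideanSpace ℝ (Fin n) | ⟪v, x⟫ = 0} ∩ {x | ⟪w, x⟫ = 0} ⊆ {x | ⟪u, x⟫ = 0}) :
    ∃ a b : ℝ, u = a • v + b • w := by
  obtain ⟨y, hy, z, hz, huyz⟩ :=
    Submodule.exists_add_mem_mem_orthogonal (K := Submodule.span ℝ {v, w}) u
  have hvz : ⟪v, z⟫ = (0 : ℝ) := hz v (Submodule.subset_span (by simp))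
  have hwz : ⟪w, z⟫ = (0 : ℝ) := hz w (Submodule.subset_span (by simp))
  have hyz : ⟪y, z⟫ = (0 : ℝ) := hz y hy
  have huz : ⟪u, z⟫ = (0 : ℝ) := h ⟨hvz, hwz⟩
  have hzz : ⟪z, z⟫ = (0 : ℝ) := by
    have : ⟪y + z, z⟫ = (0 : ℝ) := by rw [← huyz]; exact huz
    rw [inner_add_left, hyz] at this
    linarith
  have hz0 : z = 0 := inner_self_eq_zero.mp hzz
  have : u ∈ Submodule.span ℝ ({v, w} : Set (EuclideanSpace ℝ (Fin n))) := by
    rw [huyz, hz0, add_zero]; exact hy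
  obtain ⟨a, b, hab⟩ := Submodule.mem_span_pair.mp this
  exact ⟨a, b, hab.symm⟩

/-! ### Cells -/

/-- The open sign cell of `x` in the arrangement `A`, w.r.t. a choice of normals `ν`. -/
def cell (ν : Set (EuclideanSpace ℝ (Fin n)) → EuclideanSpace ℝ (Fin n))
    (A : Set (Set (EuclideanSpace ℝ (Fin n)))) (x : EuclideanSpace ℝ (Fin n)) :
    Set (EuclideanSpace ℝ (Fin n)) :=
  {y | ∀ K ∈ A, 0 < ⟪ν K, x⟫ * ⟪ν K, y⟫}

section Cell

variable {ν : Set (EuclideanSpace ℝ (Fin n)) → EuclideanSpace ℝ (Fin n)}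
variable {A : Set (Set (EuclideanSpace ℝ (Fin n)))}
variable (hν : ∀ K ∈ A, ν K ≠ 0 ∧ K = {x : EuclideanSpace ℝ (Fin n) | ⟪ν K, x⟫ = 0})

include hν

lemma mem_hyp_iff {K : Set (EuclideanSpace ℝ (Fin n))} (hK : K ∈ A)
    {x : EuclideanSpace ℝ (Fin n)} : x ∈ K ↔ ⟪ν K, x⟫ = 0 := by
  conv_lhs => rw [(hν K hK).2]
  rfl

lemma inner_ne_zero_of_compl {K : Set (EuclideanSpace ℝ (Fin n))} (hK : K ∈ A)
    {x : EuclideanSpace ℝ (Fin n)} (hx : x ∈ arrComplement A) : ⟪ν K, x⟫ ≠ 0 := by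
  intro h0
  have : x ∈ K := (mem_hyp_iff hν hK).mpr h0
  exact hx (Set.mem_biUnion hK this)

lemma cell_subset_compl {x : EuclideanSpace ℝ (Fin n)} :
    cell ν A x ⊆ arrComplement A := by
  intro y hy
  intro hmem
  obtain ⟨K, hK, hyK⟩ := Set.mem_iUnion₂.mp hmem
  have h1 : ⟪ν K, y⟫ = 0 := (mem_hyp_iff hν hK).mp hyK
  have := hy K hK
  rw [h1, mul_zero] at this
  exact lt_irrefl 0 this

lemma mem_cell_self {x : EuclideanSpace ℝ (Fin n)} (hx : x ∈ arrComplement A) :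
    x ∈ cell ν A x := by
  intro K hK
  have := inner_ne_zero_of_compl hν hK hx
  exact mul_self_pos.mpr this

omit hν in
lemma cell_convex {x : EuclideanSpace ℝ (Fin n)} : Convex ℝ (cell ν A x) := by
  intro y hy z hz a b ha hb hab
  intro K hK
  have hy' := hy K hK
  have hz' := hz K hK
  have hexp : ⟪ν K, a • y + b • z⟫ = a * ⟪ν K, y⟫ + b * ⟪ν K, z⟫ := by
    rw [inner_add_right, real_inner_smul_right, real_inner_smul_right]
  rw [hexp]
  rcases ha.eq_or_lt with h0 | hapos
  · have hb1 : b = 1 := by linarith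
    have e : ⟪ν K, x⟫ * (a * ⟪ν K, y⟫ + b * ⟪ν K, z⟫) = ⟪ν K, x⟫ * ⟪ν K, z⟫ := by
      rw [← h0, hb1]; ring
    rw [e]; exact hz'
  · have e : ⟪ν K, x⟫ * (a * ⟪ν K, y⟫ + b * ⟪ν K, z⟫)
        = a * (⟪ν K, x⟫ * ⟪ν K, y⟫) + b * (⟪ν K, x⟫ * ⟪ν K, z⟫) := by ring
    rw [e]
    have h1 := mul_pos hapos hy'
    have h2 := mul_nonneg hb hz'.le
    linarith

omit hν in
lemma cell_open (hfin : A.Finite) {x : EuclideanSpace ℝ (Fin n)} : IsOpen (cell ν A x) := by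
  have : cell ν A x = ⋂ K ∈ A, {y : EuclideanSpace ℝ (Fin n) | 0 < ⟪ν K, x⟫ * ⟪ν K, y⟫} := by
    ext y; simp [cell]
  rw [this]
  refine hfin.isOpen_biInter fun K hK => ?_
  exact isOpen_lt continuous_const
    (continuous_const.mul (continuous_const.inner continuous_id))

lemma comp_eq_cell (hfin : A.Finite) {x : EuclideanSpace ℝ (Fin n)}
    (hx : x ∈ arrComplement A) :
    connectedComponentIn (arrComplement A) x = cell ν A x := by
  apply Set.Subset.antisymm
  · intro y hy
    intro K hK
    by_contra hle
    push_neg at hle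
    have hxne := inner_ne_zero_of_compl hν hK hx
    have hyne : ⟪ν K, y⟫ ≠ 0 :=
      inner_ne_zero_of_compl hν hK (connectedComponentIn_subset _ _ hy)
    have hne : ⟪ν K, x⟫ * ⟪ν K, y⟫ < 0 := lt_of_le_of_ne hle (mul_ne_zero hxne hyne)
    -- intermediate value on the connected component
    have hpc : IsPreconnected (connectedComponentIn (arrComplement A) x) :=
      isPreconnected_connectedComponentIn
    have hcont : ContinuousOn (fun z => (⟪ν K, z⟫ : ℝ))
        (connectedComponentIn (arrComplement A) x) :=
      (continuous_const.inner continuous_id).continuousOn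
    have himg : IsPreconnected ((fun z => (⟪ν K, z⟫ : ℝ)) ''
        connectedComponentIn (arrComplement A) x) := hpc.image _ hcont
    have hoc := himg.ordConnected
    have hximg : (⟪ν K, x⟫ : ℝ) ∈ _ := Set.mem_image_of_mem _ (mem_connectedComponentIn hx)
    have hyimg : (⟪ν K, y⟫ : ℝ) ∈ _ := Set.mem_image_of_mem _ hy
    have h0 : (0 : ℝ) ∈ (fun z => (⟪ν K, z⟫ : ℝ)) ''
        connectedComponentIn (arrComplement A) x := by
      rcases lt_or_ge (⟪ν K, x⟫ : ℝ) 0 with hlt | hge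
      · have hypos : 0 < ⟪ν K, y⟫ := by nlinarith
        exact hoc.out hximg hyimg ⟨le_of_lt hlt, le_of_lt hypos⟩
      · have hxpos : 0 < ⟪ν K, x⟫ := lt_of_le_of_ne hge (Ne.symm hxne)
        have hyneg : ⟪ν K, y⟫ < 0 := by nlinarith
        exact hoc.out hyimg hximg ⟨le_of_lt hyneg, le_of_lt hxpos⟩
    obtain ⟨z, hz, hz0⟩ := h0
    have hzc : z ∈ arrComplement A := connectedComponentIn_subset _ _ hz
    exact inner_ne_zero_of_compl hν hK hzc hz0
  · exact IsPreconnected.subset_connectedComponentIn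
      (cell_convex.isPreconnected) (mem_cell_self hν hx) (cell_subset_compl hν)

omit hν in
lemma interior_closure_of_open_convex {s : Set (EuclideanSpace ℝ (Fin n))}
    (ho : IsOpen s) (hc : Convex ℝ s) (hne : s.Nonempty) :
    interior (closure s) = s := by
  obtain ⟨x₀, hx₀⟩ := hne
  apply Set.Subset.antisymm
  · intro y hy
    rcases eq_or_ne y x₀ with rfl | hyne
    · exact hx₀
    obtain ⟨δ, hδ, hball⟩ := Metric.isOpen_iff.mp isOpen_interior y hy
    have hdist : 0 < ‖y - x₀‖ := norm_sub_pos_iff.mpr hyne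
    set ε : ℝ := δ / (2 * ‖y - x₀‖) with hε
    have hεpos : 0 < ε := by positivity
    have hz : y + ε • (y - x₀) ∈ closure s := by
      apply interior_subset
      apply hball
      rw [Metric.mem_ball, dist_eq_norm]
      have : y + ε • (y - x₀) - y = ε • (y - x₀) := by abel
      rw [this, norm_smul, Real.norm_eq_abs, abs_of_pos hεpos, hε]
      rw [div_mul_eq_mul_div, mul_comm]
      rw [div_lt_iff₀ (by positivity)]
      nlinarith
    set a : ℝ := ε / (1 + ε) with ha
    set b : ℝ := 1 / (1 + ε) with hb
    have h1ε : (0:ℝ) < 1 + ε := by linarith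
    have hapos : 0 < a := by positivity
    have hbpos : (0:ℝ) ≤ b := by positivity
    have h1' : (1 + ε) ≠ 0 := ne_of_gt h1ε
    have habs : a + b = 1 := by rw [ha, hb]; field_simp; ring
    have hcomb : a • x₀ + b • (y + ε • (y - x₀)) = y := by
      rw [ha, hb]
      have h1 : (1 + ε) ≠ 0 := ne_of_gt h1ε
      rw [smul_add, smul_smul]
      rw [← add_assoc]
      have : (ε / (1 + ε)) • x₀ + (1 / (1 + ε)) • y + (1 / (1 + ε) * ε) • (y - x₀)
          = ((ε / (1 + ε)) - (1 / (1 + ε) * ε)) • x₀ + ((1 / (1 + ε)) + (1 / (1 + ε) * ε)) • y := by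
        rw [smul_sub, sub_smul, add_smul]; abel
      rw [this]
      have e1 : (ε / (1 + ε)) - (1 / (1 + ε) * ε) = 0 := by field_simp; ring
      have e2 : (1 / (1 + ε)) + (1 / (1 + ε) * ε) = 1 := by field_simp
      rw [e1, e2, zero_smul, one_smul, zero_add]
    have := hc.combo_interior_closure_mem_interior
      (by rw [ho.interior_eq]; exact hx₀) hz hapos hbpos habs
    rw [hcomb, ho.interior_eq] at this
    exact this
  · exact fun y hy => (IsOpen.subset_interior_iff ho).mpr subset_closure hy

lemma interior_region (hfin : A.Finite) {x : EuclideanSpace ℝ (Fin n)}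
    (hx : x ∈ arrComplement A) :
    interior (closure (connectedComponentIn (arrComplement A) x)) = cell ν A x := by
  rw [comp_eq_cell hν hfin hx]
  exact interior_closure_of_open_convex (cell_open hfin) cell_convex
    ⟨x, mem_cell_self hν hx⟩

/-- Characterization of separation by the sign of a product of inner products. -/
lemma separates_iff (hfin : A.Finite) {xB xR : EuclideanSpace ℝ (Fin n)}
    (hxB : xB ∈ arrComplement A) (hxR : xR ∈ arrComplement A)
    {K : Set (EuclideanSpace ℝ (Fin n))} (hK : K ∈ A) :
    Separates K (closure (connectedComponentIn (arrComplement A) xR))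
      (closure (connectedComponentIn (arrComplement A) xB)) ↔
    ⟪ν K, xB⟫ * ⟪ν K, xR⟫ < 0 := by
  have hintR := interior_region hν hfin hxR
  have hintB := interior_region hν hfin hxB
  constructor
  · rintro ⟨v, hv0, hKv, hpos, hneg⟩
    obtain ⟨c, hcv⟩ : ∃ c : ℝ, v = c • ν K :=
      normal_proportional (hν K hK).1 ((hν K hK).2.symm.trans hKv)
    have hR : 0 < ⟪v, xR⟫ := hpos xR (by rw [hintR]; exact mem_cell_self hν hxR)
    have hB : ⟪v, xB⟫ < 0 := hneg xB (by rw [hintB]; exact mem_cell_self hν hxB)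
    rw [hcv, real_inner_smul_left] at hR hB
    nlinarith [mul_pos hR (neg_pos.mpr hB), sq_nonneg c]
  · intro hprod
    refine ⟨⟪ν K, xR⟫ • ν K, ?_, ?_, ?_, ?_⟩
    · exact smul_ne_zero (inner_ne_zero_of_compl hν hK hxR) (hν K hK).1
    · have hne := inner_ne_zero_of_compl hν hK hxR
      conv_lhs => rw [(hν K hK).2]
      ext z
      simp only [Set.mem_setOf_eq, real_inner_smul_left]
      constructor
      · intro h; rw [h, mul_zero]
      · intro h; exact (mul_eq_zero.mp h).resolve_left hne
    · intro z hz
      rw [hintR] at hz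
      have := hz K hK
      rw [real_inner_smul_left]
      nlinarith
    · intro z hz
      rw [hintB] at hz
      have h1 := hz K hK
      rw [real_inner_smul_left]
      nlinarith [mul_pos h1 (neg_pos.mpr hprod), sq_nonneg (⟪ν K, xB⟫ : ℝ)]

end Cell

end ShardArrowAux

open ShardArrowAux in
/-- **Lemma (Reading, Lemma 15).** -/
theorem shard_arrow {n : ℕ}
    (A : Set (Set (EuclideanSpace ℝ (Fin n)))) (B : Set (EuclideanSpace ℝ (Fin n)))
    (hA : IsCentralArrangement A) (hB : IsRegion A B)
    (J M : Set (EuclideanSpace ℝ (Fin n))) (hsub : SubcritReg A B J M)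
    (Jst HJ : Set (EuclideanSpace ℝ (Fin n)))
    (hcov : CoversReg A B J Jst) (hsep : sepSet A B Jst = sepSet A B J \ {HJ})
    (H : Set (EuclideanSpace ℝ (Fin n))) (hHA : H ∈ A)
    (hHJ' : H ∉ sepSet A B J) (hHM : H ∈ sepSet A B M) :
    IsBasicIn (pencil A H HJ) B HJ := by
  classical
  obtain ⟨hAfin, -, hAhyp⟩ := hA
  have h' : ∀ K ∈ A, ∃ v : EuclideanSpace ℝ (Fin n), v ≠ 0 ∧ K = {x | ⟪v, x⟫ = 0} := hAhyp
  choose! ν hν using h'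
  have hne : ∀ K ∈ A, ∀ x ∈ arrComplement A, ⟪ν K, x⟫ ≠ 0 := fun K hK x hx =>
    inner_ne_zero_of_compl hν hK hx
  obtain ⟨xB, hxB, hBdef⟩ := hB
  obtain ⟨hJreg, hMreg, hnJM, hJlow, -⟩ := hsub
  obtain ⟨xJ, hxJ, hJdef⟩ := id hJreg
  obtain ⟨xM, hxM, hMdef⟩ := id hMreg
  obtain ⟨hJstreg, hltJstJ, -⟩ := hcov
  obtain ⟨xJst, hxJst, hJstdef⟩ := id hJstreg
  -- separation characterization
  have hsepRiff : ∀ (R : Set (EuclideanSpace ℝ (Fin n))) (xR : EuclideanSpace ℝ (Fin n)),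
      xR ∈ arrComplement A →
      R = closure (connectedComponentIn (arrComplement A) xR) →
      ∀ K ∈ A, (K ∈ sepSet A B R ↔ ⟪ν K, xB⟫ * ⟪ν K, xR⟫ < 0) := by
    intro R xR hxR hRdef K hK
    constructor
    · rintro ⟨-, hs⟩
      rw [hRdef, hBdef] at hs
      exact (separates_iff hν hAfin hxB hxR hK).mp hs
    · intro h
      refine ⟨hK, ?_⟩
      rw [hRdef, hBdef]
      exact (separates_iff hν hAfin hxB hxR hK).mpr h
  have hsgn : ∀ (R : Set (EuclideanSpace ℝ (Fin n))) (xR : EuclideanSpace ℝ (Fin n)),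
      xR ∈ arrComplement A →
      R = closure (connectedComponentIn (arrComplement A) xR) →
      ∀ K ∈ A, K ∉ sepSet A B R → 0 < ⟪ν K, xB⟫ * ⟪ν K, xR⟫ := by
    intro R xR hxR hRdef K hK hnot
    rcases lt_trichotomy (⟪ν K, xB⟫ * ⟪ν K, xR⟫ : ℝ) 0 with h | h | h
    · exact absurd ((hsepRiff R xR hxR hRdef K hK).mpr h) hnot
    · exact absurd h (mul_ne_zero (hne K hK xB hxB) (hne K hK xR hxR))
    · exact h
  -- basic membership facts
  have hHJJ : HJ ∈ sepSet A B J := by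
    by_contra hc
    have : sepSet A B Jst = sepSet A B J := by
      rw [hsep, Set.diff_singleton_eq_self hc]
    exact hltJstJ.2 (by rw [regLE, this])
  have hHJA : HJ ∈ A := hHJJ.1
  have hHne : H ≠ HJ := fun e => hHJ' (e ▸ hHJJ)
  have hJstM : regLE A B Jst M := hJlow Jst hJstreg hltJstJ
  have hHJM : HJ ∉ sepSet A B M := by
    intro hc
    apply hnJM
    intro K hKJ
    rcases eq_or_ne K HJ with rfl | hKne
    · exact hc
    · exact hJstM (by rw [hsep]; exact ⟨hKJ, fun h => hKne (Set.mem_singleton_iff.mp h)⟩)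
  have hHJnJst : HJ ∉ sepSet A B Jst := by
    rw [hsep]; exact fun h => h.2 rfl
  have hHnJst : H ∉ sepSet A B Jst := by
    rw [hsep]; exact fun h => hHJ' h.1
  -- signs
  have sHJ_J : ⟪ν HJ, xB⟫ * ⟪ν HJ, xJ⟫ < 0 := (hsepRiff J xJ hxJ hJdef HJ hHJA).mp hHJJ
  have sHJ_Jst : 0 < ⟪ν HJ, xB⟫ * ⟪ν HJ, xJst⟫ := hsgn Jst xJst hxJst hJstdef HJ hHJA hHJnJst
  have sH_M : ⟪ν H, xB⟫ * ⟪ν H, xM⟫ < 0 := (hsepRiff M xM hxM hMdef H hHA).mp hHM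
  have sHJ_M : 0 < ⟪ν HJ, xB⟫ * ⟪ν HJ, xM⟫ := hsgn M xM hxM hMdef HJ hHJA hHJM
  -- the point p on HJ between the cells of J and Jst
  have hii : (⟪ν HJ, xJst⟫ : ℝ) * ⟪ν HJ, xJ⟫ < 0 := by
    nlinarith [mul_pos sHJ_Jst (neg_pos.mpr sHJ_J), sq_nonneg (⟪ν HJ, xB⟫ : ℝ)]
  have hden : (⟪ν HJ, xJst⟫ : ℝ) - ⟪ν HJ, xJ⟫ ≠ 0 := by
    intro h
    have : (⟪ν HJ, xJst⟫ : ℝ) = ⟪ν HJ, xJ⟫ := by linarith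
    rw [this] at hii
    nlinarith [sq_nonneg (⟪ν HJ, xJ⟫ : ℝ)]
  set t0 : ℝ := ⟪ν HJ, xJst⟫ / (⟪ν HJ, xJst⟫ - ⟪ν HJ, xJ⟫) with ht0def
  have ht0 : 0 ≤ t0 ∧ t0 ≤ 1 := by
    rcases lt_trichotomy (⟪ν HJ, xJst⟫ : ℝ) 0 with h | h | h
    · have hiJ : (0:ℝ) < ⟪ν HJ, xJ⟫ := by nlinarith
      have hd : (⟪ν HJ, xJst⟫ : ℝ) - ⟪ν HJ, xJ⟫ < 0 := by linarith
      constructor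
      · rw [ht0def, div_nonneg_iff]
        exact Or.inr ⟨h.le, hd.le⟩
      · rw [ht0def, div_le_one_iff]
        exact Or.inr (Or.inr ⟨hd, by linarith⟩)
    · rw [h] at hii; nlinarith
    · have hiJ : (⟪ν HJ, xJ⟫ : ℝ) < 0 := by nlinarith
      have hd : (0:ℝ) < ⟪ν HJ, xJst⟫ - ⟪ν HJ, xJ⟫ := by linarith
      constructor
      · exact div_nonneg h.le hd.le
      · rw [ht0def, div_le_one hd]; linarith
  set p : EuclideanSpace ℝ (Fin n) := xJst + t0 • (xJ - xJst) with hpdef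
  have hinnerp : ∀ w : EuclideanSpace ℝ (Fin n),
      ⟪w, p⟫ = (1 - t0) * ⟪w, xJst⟫ + t0 * ⟪w, xJ⟫ := by
    intro w
    rw [hpdef, inner_add_right, real_inner_smul_right, inner_sub_right]
    ring
  have hpHJ : ⟪ν HJ, p⟫ = (0:ℝ) := by
    rw [hinnerp, ht0def]
    exact combo_zero hden
  -- tau dichotomy
  have hτneg : ∀ K ∈ A, K ∈ sepSet A B Jst → ⟪ν K, xB⟫ * ⟪ν K, p⟫ < 0 := by
    intro K hK hKJst
    have hKJ : K ∈ sepSet A B J := (hsep ▸ hKJst).1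
    have h1 : ⟪ν K, xB⟫ * ⟪ν K, xJst⟫ < 0 := (hsepRiff Jst xJst hxJst hJstdef K hK).mp hKJst
    have h2 : ⟪ν K, xB⟫ * ⟪ν K, xJ⟫ < 0 := (hsepRiff J xJ hxJ hJdef K hK).mp hKJ
    rw [hinnerp]
    have e : ⟪ν K, xB⟫ * ((1 - t0) * ⟪ν K, xJst⟫ + t0 * ⟪ν K, xJ⟫)
        = (1 - t0) * (⟪ν K, xB⟫ * ⟪ν K, xJst⟫) + t0 * (⟪ν K, xB⟫ * ⟪ν K, xJ⟫) := by ring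
    rw [e]
    rcases lt_or_eq_of_le ht0.2 with hlt | heq
    · have hA1 : (1 - t0) * (⟪ν K, xB⟫ * ⟪ν K, xJst⟫) < 0 :=
        mul_neg_of_pos_of_neg (by linarith) h1
      have hA2 : t0 * (⟪ν K, xB⟫ * ⟪ν K, xJ⟫) ≤ 0 :=
        mul_nonpos_of_nonneg_of_nonpos ht0.1 h2.le
      linarith
    · rw [heq]; simpa using h2
  have hτpos : ∀ K ∈ A, K ≠ HJ → K ∉ sepSet A B Jst → 0 < ⟪ν K, xB⟫ * ⟪ν K, p⟫ := by
    intro K hK hKne hKJst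
    have hKJ : K ∉ sepSet A B J := by
      intro hc
      exact hKJst (by rw [hsep]; exact ⟨hc, fun h => hKne (Set.mem_singleton_iff.mp h)⟩)
    have h1 : 0 < ⟪ν K, xB⟫ * ⟪ν K, xJst⟫ := hsgn Jst xJst hxJst hJstdef K hK hKJst
    have h2 : 0 < ⟪ν K, xB⟫ * ⟪ν K, xJ⟫ := hsgn J xJ hxJ hJdef K hK hKJ
    rw [hinnerp]
    have e : ⟪ν K, xB⟫ * ((1 - t0) * ⟪ν K, xJst⟫ + t0 * ⟪ν K, xJ⟫)
        = (1 - t0) * (⟪ν K, xB⟫ * ⟪ν K, xJst⟫) + t0 * (⟪ν K, xB⟫ * ⟪ν K, xJ⟫) := by ring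
    rw [e]
    rcases lt_or_eq_of_le ht0.2 with hlt | heq
    · have hA1 : 0 < (1 - t0) * (⟪ν K, xB⟫ * ⟪ν K, xJst⟫) :=
        mul_pos (by linarith) h1
      have hA2 : 0 ≤ t0 * (⟪ν K, xB⟫ * ⟪ν K, xJ⟫) := mul_nonneg ht0.1 h2.le
      linarith
    · rw [heq]; simpa using h2
  have hτH : 0 < ⟪ν H, xB⟫ * ⟪ν H, p⟫ := hτpos H hHA hHne hHnJst
  -- key positivity on the pencil
  have hkey : ∀ K ∈ pencil A H HJ, K ≠ HJ → 0 < ⟪ν K, xB⟫ * ⟪ν K, p⟫ := by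
    intro K hKp hKne
    have hKA : K ∈ A := hKp.1
    by_contra hle
    push_neg at hle
    have hKJst : K ∈ sepSet A B Jst := by
      by_contra hnot
      exact absurd (hτpos K hKA hKne hnot) (not_lt.mpr hle)
    have hτK : ⟪ν K, xB⟫ * ⟪ν K, p⟫ < 0 := hτneg K hKA hKJst
    have hKM : K ∈ sepSet A B M := hJstM hKJst
    have sK_M : ⟪ν K, xB⟫ * ⟪ν K, xM⟫ < 0 := (hsepRiff M xM hxM hMdef K hKA).mp hKM
    obtain ⟨a, b, hab⟩ : ∃ a b : ℝ, ν K = a • ν H + b • ν HJ := by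
      apply normal_mem_span_pair
      intro z hz
      have hzH : z ∈ H := (mem_hyp_iff hν hHA).mpr hz.1
      have hzHJ : z ∈ HJ := (mem_hyp_iff hν hHJA).mpr hz.2
      exact (mem_hyp_iff hν hKA).mp (hKp.2 ⟨hzH, hzHJ⟩)
    have eB : ⟪ν K, xB⟫ = a * ⟪ν H, xB⟫ + b * ⟪ν HJ, xB⟫ := by
      rw [hab, inner_add_left, real_inner_smul_left, real_inner_smul_left]
    have eP : ⟪ν K, p⟫ = a * ⟪ν H, p⟫ := by
      rw [hab, inner_add_left, real_inner_smul_left, real_inner_smul_left, hpHJ]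
      ring
    have eM : ⟪ν K, xM⟫ = a * ⟪ν H, xM⟫ + b * ⟪ν HJ, xM⟫ := by
      rw [hab, inner_add_left, real_inner_smul_left, real_inner_smul_left]
    -- step A : (BK * a) * BH < 0
    have hA1 : (⟪ν K, xB⟫ * a) * ⟪ν H, xB⟫ < 0 := by
      have h1 : (⟪ν K, xB⟫ * a) * ⟪ν H, p⟫ < 0 := by
        have := hτK
        rw [eP, ← mul_assoc] at this
        exact this
      exact sign_neg_of_neg_pos h1 hτH
    -- step B : 0 < (BK * b) * BJ
    have hBK2 : 0 < ⟪ν K, xB⟫ * ⟪ν K, xB⟫ := mul_self_pos.mpr (hne K hKA xB hxB)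
    have e2 : ⟪ν K, xB⟫ * ⟪ν K, xB⟫
        = (⟪ν K, xB⟫ * a) * ⟪ν H, xB⟫ + (⟪ν K, xB⟫ * b) * ⟪ν HJ, xB⟫ := by
      nth_rewrite 2 [eB]
      ring
    have hA2 : 0 < (⟪ν K, xB⟫ * b) * ⟪ν HJ, xB⟫ := by linarith
    -- step C
    have sH_M' : (⟪ν H, xM⟫ : ℝ) * ⟪ν H, xB⟫ < 0 := by rw [mul_comm]; exact sH_M
    have sHJ_M' : 0 < (⟪ν HJ, xM⟫ : ℝ) * ⟪ν HJ, xB⟫ := by rw [mul_comm]; exact sHJ_M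
    have hA3 : 0 < (⟪ν K, xB⟫ * a) * ⟪ν H, xM⟫ := sign_pos_of_neg_neg hA1 sH_M'
    have hA4 : 0 < (⟪ν K, xB⟫ * b) * ⟪ν HJ, xM⟫ := sign_pos_of_pos_pos hA2 sHJ_M'
    have e3 : ⟪ν K, xB⟫ * ⟪ν K, xM⟫
        = (⟪ν K, xB⟫ * a) * ⟪ν H, xM⟫ + (⟪ν K, xB⟫ * b) * ⟪ν HJ, xM⟫ := by
      rw [eM]; ring
    linarith
  -- the base region of the pencil
  have hA'sub : pencil A H HJ ⊆ A := fun K hK => hK.1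
  have hA'fin : (pencil A H HJ).Finite := hAfin.subset hA'sub
  have hν' : ∀ K ∈ pencil A H HJ, ν K ≠ 0 ∧ K = {x : EuclideanSpace ℝ (Fin n) | ⟪ν K, x⟫ = 0} :=
    fun K hK => hν K (hA'sub hK)
  have hcompl_mono : arrComplement A ⊆ arrComplement (pencil A H HJ) := by
    intro x hx hmem
    apply hx
    obtain ⟨K, hK, hxK⟩ := Set.mem_iUnion₂.mp hmem
    exact Set.mem_biUnion (hA'sub hK) hxK
  have hxB' : xB ∈ arrComplement (pencil A H HJ) := hcompl_mono hxB
  have hcomp' : connectedComponentIn (arrComplement (pencil A H HJ)) xB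
      = cell ν (pencil A H HJ) xB := comp_eq_cell hν' hA'fin hxB'
  have hclosure_mem : ∀ q : EuclideanSpace ℝ (Fin n),
      (∀ K ∈ pencil A H HJ, 0 ≤ ⟪ν K, xB⟫ * ⟪ν K, q⟫) →
      q ∈ closure (connectedComponentIn (arrComplement (pencil A H HJ)) xB) := by
    intro q hq
    rw [hcomp']
    apply mem_closure_of_tendsto
      (f := fun k : ℕ => q + ((1:ℝ)/(k+1)) • xB) (b := Filter.atTop)
    · have h1 : Filter.Tendsto (fun k : ℕ => ((1:ℝ)/(k+1))) Filter.atTop (nhds 0) :=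
        tendsto_one_div_add_atTop_nhds_zero_nat
      have h2 := (h1.smul_const xB).const_add q
      simpa using h2
    · apply Filter.Eventually.of_forall
      intro k K hK
      have hc : (0:ℝ) < 1/(k+1) := by positivity
      have e : ⟪ν K, q + ((1:ℝ)/(k+1)) • xB⟫
          = ⟪ν K, q⟫ + ((1:ℝ)/(k+1)) * ⟪ν K, xB⟫ := by
        rw [inner_add_right, real_inner_smul_right]
      rw [e]
      have hBK : (⟪ν K, xB⟫ : ℝ) ≠ 0 := hne K (hA'sub hK) xB hxB
      nlinarith [hq K hK, mul_pos hc (mul_self_pos.mpr hBK)]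
  have hpB' : p ∈ closure (connectedComponentIn (arrComplement (pencil A H HJ)) xB) := by
    apply hclosure_mem
    intro K hK
    rcases eq_or_ne K HJ with rfl | hKne
    · rw [hpHJ, mul_zero]
    · exact (hkey K hK hKne).le
  have hHHJB' : ∀ z, z ∈ H ∩ HJ →
      z ∈ closure (connectedComponentIn (arrComplement (pencil A H HJ)) xB) := by
    intro z hz
    apply hclosure_mem
    intro K hK
    rw [(mem_hyp_iff hν (hA'sub hK)).mp (hK.2 hz), mul_zero]
  -- assemble
  refine ⟨⟨hHJA, Set.inter_subset_right⟩,
    closure (connectedComponentIn (arrComplement (pencil A H HJ)) xB),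
    ⟨xB, hxB', rfl⟩, ?_, ?_⟩
  · rw [hBdef]
    apply closure_mono
    exact IsPreconnected.subset_connectedComponentIn isPreconnected_connectedComponentIn
      (mem_connectedComponentIn hxB)
      ((connectedComponentIn_subset _ _).trans hcompl_mono)
  · apply le_antisymm
    · exact Submodule.span_mono Set.inter_subset_left
    · rw [Submodule.span_le]
      intro z hzHJ
      have hzJ : ⟪ν HJ, z⟫ = (0:ℝ) := (mem_hyp_iff hν hHJA).mp hzHJ
      have hPH : (⟪ν H, p⟫ : ℝ) ≠ 0 := by
        intro h0
        rw [h0, mul_zero] at hτH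
        exact lt_irrefl _ hτH
      set c : ℝ := ⟪ν H, z⟫ / ⟪ν H, p⟫ with hcdef
      have hw1 : ⟪ν H, z - c • p⟫ = (0:ℝ) := by
        rw [inner_sub_right, real_inner_smul_right, hcdef,
          div_mul_cancel₀ _ hPH, sub_self]
      have hw2 : ⟪ν HJ, z - c • p⟫ = (0:ℝ) := by
        rw [inner_sub_right, real_inner_smul_right, hzJ, hpHJ]
        ring
      have hwmem : z - c • p ∈ HJ ∩
          closure (connectedComponentIn (arrComplement (pencil A H HJ)) xB) :=
        ⟨(mem_hyp_iff hν hHJA).mpr hw2,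
          hHHJB' _ ⟨(mem_hyp_iff hν hHA).mpr hw1, (mem_hyp_iff hν hHJA).mpr hw2⟩⟩
      have hpmem : p ∈ HJ ∩
          closure (connectedComponentIn (arrComplement (pencil A H HJ)) xB) :=
        ⟨(mem_hyp_iff hν hHJA).mpr hpHJ, hpB'⟩
      have hzsum : z = (z - c • p) + c • p := by abel
      rw [hzsum]
      exact Submodule.add_mem _ (Submodule.subset_span hwmem)
        (Submodule.smul_mem _ c (Submodule.subset_span hpmem))
end
end

section
/- Let 𝒜 be a central hyperplane arrangement in ℝⁿ with base region B, and let I ⊆ 𝒜 induce an acyclic sub-digraph of the basic digraph 𝒟(𝒜,B). Then the order-preserving map η_I : 𝒫(𝒜,B) → ℕ reverses every subcritical pair in F_I, i.e. η_I(M) < η_I(J) for every subcritical pair (J,M) associated to a hyperplane of I. -/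
open scoped RealInnerProductSpace

noncomputable section

variable {n : ℕ}

/-- The map η_I of Lemma 16: given an ordering `h : Fin k → 𝒜` of the hyperplanes of `I`,
the region `R` is sent to the binary number whose `i`-th digit (from the left) records
whether `h i ∈ S(R)`. -/
def etaMap (A : Set (Set (EuclideanSpace ℝ (Fin n)))) (B : Set (EuclideanSpace ℝ (Fin n)))
    {k : ℕ} (h : Fin k → Set (EuclideanSpace ℝ (Fin n)))
    (R : Set (EuclideanSpace ℝ (Fin n))) : ℕ :=
  ∑ i : Fin k,
    Set.indicator {i : Fin k | h i ∈ sepSet A B R} (fun i => 2 ^ (k - 1 - (i : ℕ))) i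

section AuxLemmas

variable {n : ℕ}

private lemma innerCont (w : EuclideanSpace ℝ (Fin n)) :
    Continuous fun x : EuclideanSpace ℝ (Fin n) => ⟪w, x⟫ :=
  continuous_const.inner continuous_id

private lemma arr_open {A : Set (Set (EuclideanSpace ℝ (Fin n)))}
    (hA : IsCentralArrangement A) : IsOpen (arrComplement A) := by
  have hcl : IsClosed (⋃ H ∈ A, H) := by
    refine Set.Finite.isClosed_biUnion hA.1 ?_
    intro H hH
    obtain ⟨v, hv, rfl⟩ := hA.2.2 H hH
    exact isClosed_eq (innerCont v) continuous_const
  exact hcl.isOpen_compl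

private lemma mem_interior_region {A : Set (Set (EuclideanSpace ℝ (Fin n)))}
    (hA : IsCentralArrangement A) {x : EuclideanSpace ℝ (Fin n)} (hx : x ∈ arrComplement A) :
    x ∈ interior (closure (connectedComponentIn (arrComplement A) x)) := by
  obtain ⟨ε, hε, hball⟩ := Metric.isOpen_iff.mp (arr_open hA) x hx
  have hconn : Metric.ball x ε ⊆ connectedComponentIn (arrComplement A) x :=
    (convex_ball x ε).isPreconnected.subset_connectedComponentIn
      (Metric.mem_ball_self hε) hball
  exact interior_maximal (hconn.trans subset_closure) Metric.isOpen_ball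
    (Metric.mem_ball_self hε)

/-- All points of the interior of a region lie strictly on the same side of any hyperplane
disjoint from the ambient open set, namely the side of the base point. -/
private lemma side_pos {Ω : Set (EuclideanSpace ℝ (Fin n))} {x : EuclideanSpace ℝ (Fin n)}
    (hx : x ∈ Ω) {v : EuclideanSpace ℝ (Fin n)}
    (hdisj : ∀ z ∈ Ω, ⟪v, z⟫ ≠ 0) (hxv : 0 < ⟪v, x⟫) :
    ∀ z ∈ interior (closure (connectedComponentIn Ω x)), 0 < ⟪v, z⟫ := by
  have hU : connectedComponentIn Ω x ⊆ {z | 0 < ⟪v, z⟫} := by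
    refine IsPreconnected.subset_left_of_subset_union
      (u := {z : EuclideanSpace ℝ (Fin n) | 0 < ⟪v, z⟫})
      (v := {z : EuclideanSpace ℝ (Fin n) | ⟪v, z⟫ < 0})
      (isOpen_lt continuous_const (innerCont v)) (isOpen_lt (innerCont v) continuous_const)
      ?_ ?_ ?_ isPreconnected_connectedComponentIn
    · rw [Set.disjoint_left]
      intro z h1 h2
      simp only [Set.mem_setOf_eq] at h1 h2
      linarith
    · intro z hz
      have hz0 : (⟪v, z⟫ : ℝ) ≠ 0 := hdisj z (connectedComponentIn_subset Ω x hz)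
      rcases hz0.lt_or_gt with hlt | hgt
      · exact Or.inr hlt
      · exact Or.inl hgt
    · exact ⟨x, mem_connectedComponentIn hx, hxv⟩
  have hvne : v ≠ 0 := by
    intro hv0
    rw [hv0] at hxv
    simpa using hxv
  have hcl : closure (connectedComponentIn Ω x) ⊆ {z | 0 ≤ ⟪v, z⟫} :=
    closure_minimal (fun z hz => show (0:ℝ) ≤ ⟪v, z⟫ from (hU hz).le)
      (isClosed_le continuous_const (innerCont v))
  intro z hz
  obtain ⟨ε, hε, hball⟩ := Metric.mem_nhds_iff.mp (mem_interior_iff_mem_nhds.mp hz)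
  set δ : ℝ := ε / (2 * (‖v‖ + 1)) with hδ
  have hnorm : (0:ℝ) < ‖v‖ := norm_pos_iff.mpr hvne
  have hδpos : 0 < δ := by positivity
  have hmem : z - δ • v ∈ Metric.ball z ε := by
    rw [Metric.mem_ball, dist_eq_norm]
    have heq : z - δ • v - z = -(δ • v) := by abel
    rw [heq, norm_neg, norm_smul, Real.norm_eq_abs, abs_of_pos hδpos]
    rw [hδ, div_mul_eq_mul_div, div_lt_iff₀ (by positivity)]
    nlinarith
  have hge : 0 ≤ ⟪v, z - δ • v⟫ := hcl (hball hmem)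
  have hexp : ⟪v, z - δ • v⟫ = ⟪v, z⟫ - δ * ⟪v, v⟫ := by
    rw [inner_sub_right, real_inner_smul_right]
  have hvv : 0 < ⟪v, v⟫ := by
    rw [real_inner_self_eq_norm_sq]; nlinarith
  nlinarith [hge, hexp]

private lemma exists_normal {A : Set (Set (EuclideanSpace ℝ (Fin n)))}
    (hA : IsCentralArrangement A) {H : Set (EuclideanSpace ℝ (Fin n))} (hH : H ∈ A)
    {b : EuclideanSpace ℝ (Fin n)} (hb : b ∈ arrComplement A) :
    ∃ w : EuclideanSpace ℝ (Fin n), w ≠ 0 ∧ H = {x | ⟪w, x⟫ = 0} ∧ 0 < ⟪w, b⟫ := by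
  obtain ⟨v, hv, hrep⟩ := hA.2.2 H hH
  have hbH : b ∉ H := fun hbH => hb (Set.mem_biUnion hH hbH)
  have hvb : ⟪v, b⟫ ≠ 0 := by
    rw [hrep] at hbH
    simpa using hbH
  rcases hvb.lt_or_gt with hlt | hgt
  · refine ⟨-v, neg_ne_zero.mpr hv, ?_, ?_⟩
    · rw [hrep]; ext x; simp [inner_neg_left]
    · rw [inner_neg_left]; linarith
  · exact ⟨v, hv, hrep, hgt⟩

/-- Characterization of separation by sign at the base points of the two regions. -/
private lemma sep_iff {A : Set (Set (EuclideanSpace ℝ (Fin n)))}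
    (hA : IsCentralArrangement A) {H : Set (EuclideanSpace ℝ (Fin n))} (hH : H ∈ A)
    {w : EuclideanSpace ℝ (Fin n)} (hrep : H = {x | ⟪w, x⟫ = 0})
    {xR xB : EuclideanSpace ℝ (Fin n)}
    (hxR : xR ∈ arrComplement A) (hxB : xB ∈ arrComplement A) (hwb : 0 < ⟪w, xB⟫) :
    Separates H (closure (connectedComponentIn (arrComplement A) xR))
      (closure (connectedComponentIn (arrComplement A) xB)) ↔ ⟪w, xR⟫ < 0 := by
  have hdisj : ∀ z ∈ arrComplement A, ⟪w, z⟫ ≠ 0 := by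
    intro z hz h0
    exact hz (Set.mem_biUnion hH (by rw [hrep]; exact h0))
  have hwne : w ≠ 0 := by
    intro h0; rw [h0] at hwb; simpa using hwb
  constructor
  · rintro ⟨v₁, hv₁, hrep₁, hRpos, hBneg⟩
    have hp : 0 < ⟪v₁, xR⟫ := hRpos xR (mem_interior_region hA hxR)
    have hq : ⟪v₁, xB⟫ < 0 := hBneg xB (mem_interior_region hA hxB)
    rcases (hdisj xR hxR).lt_or_gt with hlt | hgt
    · exact hlt
    · exfalso
      set t : ℝ := ⟪v₁, xR⟫ / (⟪v₁, xR⟫ - ⟪v₁, xB⟫) with ht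
      have hden : 0 < ⟪v₁, xR⟫ - ⟪v₁, xB⟫ := by linarith
      have ht0 : 0 < t := div_pos hp hden
      have ht1 : t < 1 := by
        rw [ht, div_lt_one hden]; linarith
      set z := (1 - t) • xR + t • xB with hz
      have hzinner : ∀ u : EuclideanSpace ℝ (Fin n),
          ⟪u, z⟫ = (1 - t) * ⟪u, xR⟫ + t * ⟪u, xB⟫ := by
        intro u
        rw [hz, inner_add_right, real_inner_smul_right, real_inner_smul_right]
      have key : ∀ p q : ℝ, 0 < p → q < 0 →
          (1 - p / (p - q)) * p + (p / (p - q)) * q = 0 := by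
        intro p q hp' hq'
        have hne : p - q ≠ 0 := ne_of_gt (by linarith)
        field_simp
        ring
      have hz1 : ⟪v₁, z⟫ = 0 := by
        rw [hzinner, ht]
        exact key _ _ hp hq
      have hzH : z ∈ H := by rw [hrep₁]; exact hz1
      have hzw : ⟪w, z⟫ = 0 := by rw [hrep] at hzH; exact hzH
      have : 0 < ⟪w, z⟫ := by
        rw [hzinner]
        have h1 : 0 < (1 - t) * ⟪w, xR⟫ := mul_pos (by linarith) hgt
        have h2 : 0 < t * ⟪w, xB⟫ := mul_pos ht0 hwb
        linarith
      linarith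
  · intro hwr
    refine ⟨-w, neg_ne_zero.mpr hwne, ?_, ?_, ?_⟩
    · rw [hrep]; ext x; simp [inner_neg_left]
    · have hdisj' : ∀ z ∈ arrComplement A, ⟪-w, z⟫ ≠ 0 := by
        intro z hz
        rw [inner_neg_left]
        exact fun h0 => hdisj z hz (by linarith [h0, neg_eq_zero.mp h0])
      have hxv : 0 < ⟪-w, xR⟫ := by rw [inner_neg_left]; linarith
      exact side_pos hxR hdisj' hxv
    · intro z hz
      have := side_pos hxB hdisj hwb z hz
      rw [inner_neg_left]
      linarith

private lemma mem_span_pair_of_ker {wJ w' w₁ : EuclideanSpace ℝ (Fin n)}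
    (hker : ∀ x : EuclideanSpace ℝ (Fin n), ⟪wJ, x⟫ = 0 → ⟪w', x⟫ = 0 → ⟪w₁, x⟫ = 0) :
    w₁ ∈ Submodule.span ℝ {wJ, w'} := by
  set W := Submodule.span ℝ ({wJ, w'} : Set (EuclideanSpace ℝ (Fin n))) with hW
  have h2 : w₁ ∈ Wᗮᗮ := by
    rw [Submodule.mem_orthogonal]
    intro x hx
    rw [Submodule.mem_orthogonal] at hx
    have h1 : ⟪wJ, x⟫ = 0 := hx wJ (Submodule.subset_span (Set.mem_insert _ _))
    have h1' : ⟪w', x⟫ = 0 := hx w'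
      (Submodule.subset_span (Set.mem_insert_of_mem _ (Set.mem_singleton _)))
    rw [real_inner_comm]
    exact hker x h1 h1'
  rwa [Submodule.orthogonal_orthogonal] at h2

private lemma sum_two_pow (m : ℕ) : ∑ t ∈ Finset.range m, 2 ^ t = 2 ^ m - 1 := by
  induction m with
  | zero => simp
  | succ m ih =>
    rw [Finset.sum_range_succ, ih]
    have h1 : 1 ≤ 2 ^ m := Nat.one_le_two_pow
    omega

end AuxLemmas


/-- **Key geometric lemma.** If `(J,M)`-type separation data holds with associated hyperplane
`HJ` and `H'` separates `M` but not `J`, then `HJ` is basic in the pencil of `HJ` and `H'`,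
i.e. there is an edge `HJ → H'` in the basic digraph. -/
private lemma key_basic {n : ℕ} {A : Set (Set (EuclideanSpace ℝ (Fin n)))}
    {B J M C HJ H' : Set (EuclideanSpace ℝ (Fin n))}
    (hA : IsCentralArrangement A)
    (hB : IsRegion A B) (hJ : IsRegion A J) (hM : IsRegion A M) (hC : IsRegion A C)
    (hJmem : HJ ∈ sepSet A B J) (hJM : HJ ∉ sepSet A B M)
    (hCJ : sepSet A B C = sepSet A B J \ {HJ})
    (hCM : sepSet A B C ⊆ sepSet A B M)
    (hH'M : H' ∈ sepSet A B M) (hH'J : H' ∉ sepSet A B J) :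
    BasicEdge A B HJ H' := by
  obtain ⟨b, hbΩ, hBdef⟩ := hB
  obtain ⟨a, haΩ, hJdef⟩ := hJ
  obtain ⟨m, hmΩ, hMdef⟩ := hM
  obtain ⟨c, hcΩ, hCdef⟩ := hC
  subst hBdef hJdef hMdef hCdef
  have hHJA : HJ ∈ A := hJmem.1
  have hH'A : H' ∈ A := hH'M.1
  have hne : HJ ≠ H' := by rintro rfl; exact hH'J hJmem
  choose! w hw0 hwrep hwb using fun H => fun (hH : H ∈ A) => exists_normal hA hH hbΩ
  have hmemiff : ∀ H, H ∈ A → ∀ r : EuclideanSpace ℝ (Fin n), r ∈ arrComplement A →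
      (H ∈ sepSet A (closure (connectedComponentIn (arrComplement A) b))
        (closure (connectedComponentIn (arrComplement A) r)) ↔ ⟪w H, r⟫ < 0) := by
    intro H hH r hr
    constructor
    · intro hmem
      exact (sep_iff hA hH (hwrep H hH) hr hbΩ (hwb H hH)).mp hmem.2
    · intro hlt
      exact ⟨hH, (sep_iff hA hH (hwrep H hH) hr hbΩ (hwb H hH)).mpr hlt⟩
  have hposof : ∀ H, H ∈ A → ∀ r : EuclideanSpace ℝ (Fin n), r ∈ arrComplement A →
      H ∉ sepSet A (closure (connectedComponentIn (arrComplement A) b))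
        (closure (connectedComponentIn (arrComplement A) r)) → 0 < ⟪w H, r⟫ := by
    intro H hH r hr hnot
    have hne0 : ⟪w H, r⟫ ≠ 0 := by
      intro h0
      exact hr (Set.mem_biUnion hH (by rw [hwrep H hH]; exact h0))
    rcases hne0.lt_or_gt with hlt | hgt
    · exact absurd ((hmemiff H hH r hr).mpr hlt) hnot
    · exact hgt
  -- sign facts at the four base points
  have hpa : ⟪w HJ, a⟫ < 0 := (hmemiff HJ hHJA a haΩ).mp hJmem
  have hpm : 0 < ⟪w HJ, m⟫ := hposof HJ hHJA m hmΩ hJM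
  have hHJC : HJ ∉ sepSet A (closure (connectedComponentIn (arrComplement A) b))
      (closure (connectedComponentIn (arrComplement A) c)) := by
    rw [hCJ]; rintro ⟨-, hmem⟩; exact hmem rfl
  have hpc : 0 < ⟪w HJ, c⟫ := hposof HJ hHJA c hcΩ hHJC
  have hea : 0 < ⟪w H', a⟫ := hposof H' hH'A a haΩ hH'J
  have hem : ⟪w H', m⟫ < 0 := (hmemiff H' hH'A m hmΩ).mp hH'M
  have hH'C : H' ∉ sepSet A (closure (connectedComponentIn (arrComplement A) b))
      (closure (connectedComponentIn (arrComplement A) c)) := by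
    rw [hCJ]; rintro ⟨hmem, -⟩; exact hH'J hmem
  have hec : 0 < ⟪w H', c⟫ := hposof H' hH'A c hcΩ hH'C
  -- Claim: no hyperplane of the pencil other than HJ separates J from B.
  have claim1 : ∀ H, H ∈ A → HJ ∩ H' ⊆ H → H ≠ HJ →
      H ∉ sepSet A (closure (connectedComponentIn (arrComplement A) b))
        (closure (connectedComponentIn (arrComplement A) a)) := by
    intro H hH hpen hneH hmem
    have hga : ⟪w H, a⟫ < 0 := (hmemiff H hH a haΩ).mp hmem
    have hHC : H ∈ sepSet A (closure (connectedComponentIn (arrComplement A) b))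
        (closure (connectedComponentIn (arrComplement A) c)) := by
      rw [hCJ]; exact ⟨hmem, fun hs => hneH hs⟩
    have hgc : ⟪w H, c⟫ < 0 := (hmemiff H hH c hcΩ).mp hHC
    have hgm : ⟪w H, m⟫ < 0 := (hmemiff H hH m hmΩ).mp (hCM hHC)
    have hgb : 0 < ⟪w H, b⟫ := hwb H hH
    have hsp : w H ∈ Submodule.span ℝ {w HJ, w H'} := by
      apply mem_span_pair_of_ker
      intro x hx1 hx2
      have hxH : x ∈ H := hpen ⟨by rw [hwrep HJ hHJA]; exact hx1,
        by rw [hwrep H' hH'A]; exact hx2⟩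
      rw [hwrep H hH] at hxH; exact hxH
    obtain ⟨lam, mu, hlm⟩ := Submodule.mem_span_pair.mp hsp
    have hexp : ∀ x : EuclideanSpace ℝ (Fin n),
        ⟪w H, x⟫ = lam * ⟪w HJ, x⟫ + mu * ⟪w H', x⟫ := by
      intro x
      rw [← hlm, inner_add_left, real_inner_smul_left, real_inner_smul_left]
    have hpb : 0 < ⟪w HJ, b⟫ := hwb HJ hHJA
    have heb : 0 < ⟪w H', b⟫ := hwb H' hH'A
    rcases le_or_gt 0 lam with hl | hl <;> rcases le_or_gt 0 mu with hm | hm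
    · nlinarith [hexp c, mul_nonneg hl (le_of_lt hpc), mul_nonneg hm (le_of_lt hec)]
    · nlinarith [hexp m, mul_nonneg hl (le_of_lt hpm), mul_pos_of_neg_of_neg hm hem]
    · nlinarith [hexp a, mul_pos_of_neg_of_neg hl hpa, mul_nonneg hm (le_of_lt hea)]
    · nlinarith [hexp b, mul_neg_of_neg_of_pos hl hpb, mul_neg_of_neg_of_pos hm heb]
  -- the crossing point y on the wall HJ
  set t : ℝ := ⟪w HJ, c⟫ / (⟪w HJ, c⟫ - ⟪w HJ, a⟫) with htdef
  have hden : 0 < ⟪w HJ, c⟫ - ⟪w HJ, a⟫ := by linarith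
  have ht0 : 0 < t := div_pos hpc hden
  have ht1 : t < 1 := by rw [htdef, div_lt_one hden]; linarith
  set y := (1 - t) • c + t • a with hydef
  have hyinner : ∀ u : EuclideanSpace ℝ (Fin n),
      ⟪u, y⟫ = (1 - t) * ⟪u, c⟫ + t * ⟪u, a⟫ := by
    intro u; rw [hydef, inner_add_right, real_inner_smul_right, real_inner_smul_right]
  have hy0 : ⟪w HJ, y⟫ = 0 := by
    have hkey : ∀ p q : ℝ, 0 < p → q < 0 → (1 - p / (p - q)) * p + (p / (p - q)) * q = 0 := by
      intro p q hp' hq'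
      have hne2 : p - q ≠ 0 := ne_of_gt (by linarith)
      field_simp
      ring
    rw [hyinner, htdef]
    exact hkey _ _ hpc hpa
  have hyH : ∀ H, H ∈ A → HJ ∩ H' ⊆ H → H ≠ HJ → 0 < ⟪w H, y⟫ := by
    intro H hH hpen hneH
    have h1 : 0 < ⟪w H, a⟫ := hposof H hH a haΩ (claim1 H hH hpen hneH)
    have hnotC : H ∉ sepSet A (closure (connectedComponentIn (arrComplement A) b))
        (closure (connectedComponentIn (arrComplement A) c)) := by
      rw [hCJ]
      rintro ⟨hmem, -⟩
      exact claim1 H hH hpen hneH hmem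
    have h2 : 0 < ⟪w H, c⟫ := hposof H hH c hcΩ hnotC
    rw [hyinner]
    have hm1 := mul_pos (by linarith : (0:ℝ) < 1 - t) h2
    have hm2 := mul_pos ht0 h1
    linarith
  -- the open convex set V where all non-HJ pencil hyperplanes are positive
  set P : Set (Set (EuclideanSpace ℝ (Fin n))) := {H | H ∈ A ∧ HJ ∩ H' ⊆ H ∧ H ≠ HJ}
    with hPdef
  have hPfin : P.Finite := hA.1.subset fun H hH => hH.1
  set V := ⋂ H ∈ P, {z : EuclideanSpace ℝ (Fin n) | 0 < ⟪w H, z⟫} with hVdef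
  have hVmem : ∀ z, z ∈ V ↔ ∀ H, H ∈ A → HJ ∩ H' ⊆ H → H ≠ HJ → 0 < ⟪w H, z⟫ := by
    intro z
    rw [hVdef, Set.mem_iInter₂]
    constructor
    · intro hz H h1 h2 h3; exact hz H ⟨h1, h2, h3⟩
    · intro hz H hH; exact hz H hH.1 hH.2.1 hH.2.2
  have hVopen : IsOpen V := Set.Finite.isOpen_biInter hPfin
    (fun H _ => isOpen_lt continuous_const (innerCont (w H)))
  have hlinmap : ∀ u : EuclideanSpace ℝ (Fin n),
      IsLinearMap ℝ (fun z : EuclideanSpace ℝ (Fin n) => ⟪u, z⟫) := by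
    intro u
    exact ⟨fun x y => inner_add_right _ _ _,
      fun cc x => by rw [real_inner_smul_right, smul_eq_mul]⟩
  have hVconv : Convex ℝ V := by
    rw [hVdef]
    exact convex_iInter fun H => convex_iInter fun _ => convex_halfSpace_gt (hlinmap (w H)) 0
  set Vp := V ∩ {z : EuclideanSpace ℝ (Fin n) | 0 < ⟪w HJ, z⟫} with hVpdef
  have hVpconv : Convex ℝ Vp := hVconv.inter (convex_halfSpace_gt (hlinmap (w HJ)) 0)
  have hbV : b ∈ V := (hVmem b).mpr fun H hH _ _ => hwb H hH
  have hbVp : b ∈ Vp := ⟨hbV, hwb HJ hHJA⟩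
  set ΩP := arrComplement (pencil A HJ H') with hΩPdef
  have hVpΩ : Vp ⊆ ΩP := by
    intro z hz
    simp only [hΩPdef, arrComplement, Set.mem_compl_iff, Set.mem_iUnion, not_exists]
    intro H hHp hzH
    have hHA : H ∈ A := hHp.1
    by_cases hHeq : H = HJ
    · subst hHeq
      have hz2 := hz.2
      rw [hwrep H hHA] at hzH
      simp only [Set.mem_setOf_eq] at hzH hz2
      linarith
    · have hpos := (hVmem z).mp hz.1 H hHA hHp.2 hHeq
      rw [hwrep H hHA] at hzH
      simp only [Set.mem_setOf_eq] at hzH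
      linarith
  have hbΩP : b ∈ ΩP := hVpΩ hbVp
  have hVpcc : Vp ⊆ connectedComponentIn ΩP b :=
    hVpconv.isPreconnected.subset_connectedComponentIn hbVp hVpΩ
  set B' := closure (connectedComponentIn ΩP b) with hB'def
  have hΩsub : arrComplement A ⊆ ΩP := by
    rw [hΩPdef]
    exact Set.compl_subset_compl.mpr (Set.biUnion_subset_biUnion_left fun H hH => hH.1)
  have hBB' : closure (connectedComponentIn (arrComplement A) b) ⊆ B' := by
    apply closure_mono
    exact isPreconnected_connectedComponentIn.subset_connectedComponentIn
      (mem_connectedComponentIn hbΩ)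
      ((connectedComponentIn_subset _ _).trans hΩsub)
  have hwJnorm : (0:ℝ) < ‖w HJ‖ := norm_pos_iff.mpr (hw0 HJ hHJA)
  -- points of V on the hyperplane HJ lie in B'
  have hVHJ : ∀ z, z ∈ V → ⟪w HJ, z⟫ = 0 → z ∈ B' := by
    intro z hzV hz0
    have hzcl : z ∈ closure Vp := by
      rw [Metric.mem_closure_iff]
      intro r hr
      obtain ⟨ε, hε, hball⟩ := Metric.isOpen_iff.mp hVopen z hzV
      set δ : ℝ := min ε r / (2 * (‖w HJ‖ + 1)) with hδdef
      have hminpos : 0 < min ε r := lt_min hε hr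
      have hδpos : 0 < δ := by positivity
      have hdist : dist z (z + δ • w HJ) < min ε r := by
        rw [dist_eq_norm]
        have heq : z - (z + δ • w HJ) = -(δ • w HJ) := by abel
        rw [heq, norm_neg, norm_smul, Real.norm_eq_abs, abs_of_pos hδpos,
          hδdef, div_mul_eq_mul_div, div_lt_iff₀ (by positivity)]
        nlinarith
      refine ⟨z + δ • w HJ, ⟨hball ?_, ?_⟩, ?_⟩
      · rw [Metric.mem_ball, dist_comm]
        exact lt_of_lt_of_le hdist (min_le_left _ _)
      · simp only [Set.mem_setOf_eq]
        rw [inner_add_right, hz0, real_inner_smul_right, real_inner_self_eq_norm_sq]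
        have h2 := mul_pos hδpos (pow_pos hwJnorm 2)
        linarith
      · exact lt_of_lt_of_le hdist (min_le_right _ _)
    exact closure_mono hVpcc hzcl
  have hyV : y ∈ V := (hVmem y).mpr hyH
  have hyB' : y ∈ B' := hVHJ y hyV hy0
  have hyHJ : y ∈ HJ := by rw [hwrep HJ hHJA]; exact hy0
  -- the span condition
  have hspan : Submodule.span ℝ (HJ ∩ B') = Submodule.span ℝ HJ := by
    refine le_antisymm (Submodule.span_mono Set.inter_subset_left) ?_
    rw [Submodule.span_le]
    intro u hu
    have hu0 : ⟪w HJ, u⟫ = 0 := by rw [hwrep HJ hHJA] at hu; exact hu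
    obtain ⟨ε, hε, hball⟩ := Metric.isOpen_iff.mp hVopen y hyV
    set δ : ℝ := ε / (2 * (‖u‖ + 1)) with hδdef
    have hδpos : 0 < δ := by positivity
    have hδne : δ ≠ 0 := ne_of_gt hδpos
    have hmemball : y + δ • u ∈ Metric.ball y ε := by
      rw [Metric.mem_ball, dist_eq_norm]
      have heq : y + δ • u - y = δ • u := by abel
      rw [heq, norm_smul, Real.norm_eq_abs, abs_of_pos hδpos, hδdef,
        div_mul_eq_mul_div, div_lt_iff₀ (by positivity)]
      nlinarith [norm_nonneg u]
    have h1 : y + δ • u ∈ V := hball hmemball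
    have h2 : ⟪w HJ, y + δ • u⟫ = 0 := by
      rw [inner_add_right, hy0, real_inner_smul_right, hu0]; ring
    have h3 : y + δ • u ∈ B' := hVHJ _ h1 h2
    have h4 : y + δ • u ∈ HJ := by rw [hwrep HJ hHJA]; exact h2
    have hu_eq : u = δ⁻¹ • (y + δ • u - y) := by
      rw [add_sub_cancel_left, smul_smul, inv_mul_cancel₀ hδne, one_smul]
    rw [hu_eq]
    exact Submodule.smul_mem _ _ (Submodule.sub_mem _
      (Submodule.subset_span ⟨h4, h3⟩) (Submodule.subset_span ⟨hyHJ, hyB'⟩))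
  exact ⟨hHJA, hH'A, hne, ⟨hHJA, Set.inter_subset_left⟩, B',
    ⟨b, hbΩP, by rw [hB'def, hΩPdef]⟩, hBB', hspan⟩

/-- **Lemma (Reading, Lemma 16).** Let `I ⊆ A` induce an acyclic sub-digraph of the basic
digraph 𝒟(𝒜,B), ordered as `H₁, …, H_k` so that edges of 𝒟(𝒜,B) within `I` go forward.
Then the order-preserving map η_I reverses every subcritical pair `(J,M)` whose associated
hyperplane lies in `I`. -/
theorem etaMap_reverses_subcritical {n k : ℕ}
    (A : Set (Set (EuclideanSpace ℝ (Fin n)))) (B : Set (EuclideanSpace ℝ (Fin n)))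
    (hA : IsCentralArrangement A) (hB : IsRegion A B)
    (h : Fin k → Set (EuclideanSpace ℝ (Fin n)))
    (hinj : Function.Injective h) (hmem : ∀ i, h i ∈ A)
    (hcompat : ∀ i j : Fin k, BasicEdge A B (h i) (h j) → i < j)
    (J M Jst HJ : Set (EuclideanSpace ℝ (Fin n)))
    (hsub : SubcritReg A B J M)
    (hcov : CoversReg A B J Jst)
    (hsep : sepSet A B Jst = sepSet A B J \ {HJ})
    (hHJ : HJ ∈ Set.range h) :
    etaMap A B h M < etaMap A B h J := by
  classical
  obtain ⟨i₀, hi₀⟩ := hHJ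
  obtain ⟨hJreg, hMreg, hnJM, h4, h5⟩ := hsub
  obtain ⟨hJstreg, hJstlt, -⟩ := hcov
  have hHJJ : HJ ∈ sepSet A B J := by
    obtain ⟨H, hH1, hH2⟩ := Set.not_subset.mp hJstlt.2
    rw [hsep] at hH2
    have hHeq : H = HJ := by
      by_contra hne
      exact hH2 ⟨hH1, fun hs => hne hs⟩
    rwa [hHeq] at hH1
  have hCM : sepSet A B Jst ⊆ sepSet A B M := h4 Jst hJstreg hJstlt
  have hHJM : HJ ∉ sepSet A B M := by
    intro hmem
    apply hnJM
    intro H hH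
    by_cases hne : H = HJ
    · rwa [hne]
    · exact hCM (by rw [hsep]; exact ⟨hH, fun hs => hne hs⟩)
  have hedge : ∀ j : Fin k, h j ∈ sepSet A B M → h j ∉ sepSet A B J → i₀ < j := by
    intro j hjM hjJ
    refine hcompat i₀ j ?_
    rw [hi₀]
    exact key_basic hA hB hJreg hMreg hJstreg hHJJ hHJM hsep hCM hjM hjJ
  have etaEq : ∀ R : Set (EuclideanSpace ℝ (Fin n)), etaMap A B h R =
      ∑ i ∈ Finset.univ.filter (fun i : Fin k => h i ∈ sepSet A B R),
        2 ^ (k - 1 - (i : ℕ)) := by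
    intro R
    rw [etaMap, Finset.sum_filter]
    refine Finset.sum_congr rfl fun i _ => ?_
    rw [Set.indicator_apply]
    simp only [Set.mem_setOf_eq]
  rw [etaEq J, etaEq M]
  set TJ := Finset.univ.filter (fun i : Fin k => h i ∈ sepSet A B J) with hTJ
  set TM := Finset.univ.filter (fun i : Fin k => h i ∈ sepSet A B M) with hTM
  have hi₀J : i₀ ∈ TJ := by
    rw [hTJ]
    simp only [Finset.mem_filter, Finset.mem_univ, true_and]
    rw [hi₀]
    exact hHJJ
  have hi₀M : i₀ ∉ TM := by
    rw [hTM]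
    simp only [Finset.mem_filter, Finset.mem_univ, true_and]
    rw [hi₀]; exact hHJM
  have hsplit : ∑ i ∈ TM, 2 ^ (k - 1 - (i:ℕ)) =
      ∑ i ∈ TM ∩ TJ, 2 ^ (k - 1 - (i:ℕ)) + ∑ i ∈ TM \ TJ, 2 ^ (k - 1 - (i:ℕ)) :=
    (Finset.sum_inter_add_sum_sdiff TM TJ _).symm
  have hsub1 : ∑ i ∈ TM ∩ TJ, 2 ^ (k - 1 - (i:ℕ)) ≤
      ∑ i ∈ TJ.erase i₀, 2 ^ (k - 1 - (i:ℕ)) := by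
    apply Finset.sum_le_sum_of_subset
    intro x hx
    rw [Finset.mem_inter] at hx
    rw [Finset.mem_erase]
    exact ⟨fun he => hi₀M (he ▸ hx.1), hx.2⟩
  have hltfact : ∀ j ∈ TM \ TJ, (i₀ : ℕ) < (j : ℕ) := by
    intro j hj
    rw [Finset.mem_sdiff, hTM, hTJ] at hj
    simp only [Finset.mem_filter, Finset.mem_univ, true_and] at hj
    exact hedge j hj.1 hj.2
  have hdiffbound : ∑ i ∈ TM \ TJ, 2 ^ (k - 1 - (i:ℕ)) < 2 ^ (k - 1 - (i₀:ℕ)) := by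
    have hinj2 : ∀ x ∈ TM \ TJ, ∀ y ∈ TM \ TJ,
        k - 1 - (x : Fin k) = k - 1 - (y : Fin k) → x = y := by
      intro x hx y hy hxy
      have h1 := hltfact x hx
      have h2 := hltfact y hy
      have hx2 : (x:ℕ) < k := x.2
      have hy2 : (y:ℕ) < k := y.2
      exact Fin.ext (by omega)
    calc ∑ i ∈ TM \ TJ, 2 ^ (k - 1 - (i:ℕ))
        = ∑ t ∈ (TM \ TJ).image (fun i : Fin k => k - 1 - (i:ℕ)), 2 ^ t :=
          (Finset.sum_image hinj2).symm
      _ ≤ ∑ t ∈ Finset.range (k - 1 - (i₀:ℕ)), 2 ^ t := by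
          apply Finset.sum_le_sum_of_subset
          intro t ht
          rw [Finset.mem_image] at ht
          obtain ⟨j, hj, rfl⟩ := ht
          rw [Finset.mem_range]
          have h1 : (i₀:ℕ) < (j:ℕ) := hltfact j hj
          have h2 : (j:ℕ) < k := j.2
          omega
      _ = 2 ^ (k - 1 - (i₀:ℕ)) - 1 := sum_two_pow _
      _ < 2 ^ (k - 1 - (i₀:ℕ)) := by
          have h1 : 1 ≤ 2 ^ (k - 1 - (i₀:ℕ)) := Nat.one_le_two_pow
          omega
  have hfin : ∑ i ∈ TJ.erase i₀, 2 ^ (k - 1 - (i:ℕ)) + 2 ^ (k - 1 - (i₀:ℕ)) =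
      ∑ i ∈ TJ, 2 ^ (k - 1 - (i:ℕ)) := Finset.sum_erase_add TJ _ hi₀J
  omega
end
end

section
/- For every n ≥ 2, the order dimension of the weak order on the symmetric group Sₙ equals n − 1. -/
/-- The inversion set of a permutation of `Fin n`. -/
def invSet {n : ℕ} (π : Equiv.Perm (Fin n)) : Set (Fin n × Fin n) :=
  {p | p.1 < p.2 ∧ π p.2 < π p.1}

/-- The weak order on the symmetric group: containment of inversion sets. -/
def weakLE {n : ℕ} (π σ : Equiv.Perm (Fin n)) : Prop :=
  invSet π ⊆ invSet σ

/-! ### Auxiliary material -/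

private lemma geom4 (m : ℕ) : ∑ t ∈ Finset.range m, 4 ^ t < 4 ^ m := by
  induction m with
  | zero => simp
  | succ m ih =>
    rw [Finset.sum_range_succ, pow_succ]
    omega

/-- Row `i` of the inversion set of `π`. -/
noncomputable def rowSet {n : ℕ} (π : Equiv.Perm (Fin n)) (i : Fin n) : Finset (Fin n) :=
  Finset.univ.filter fun b => i < b ∧ π b < π i

/-- A numerical encoding of row `i` of the inversion set of `π`. -/
noncomputable def rowVal {n : ℕ} (π : Equiv.Perm (Fin n)) (i : Fin n) : ℕ :=
  ∑ b ∈ rowSet π i, 4 ^ (n - 1 - b.val)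

lemma rowVal_mono {n : ℕ} {π σ : Equiv.Perm (Fin n)} (h : weakLE π σ) (i : Fin n) :
    rowVal π i ≤ rowVal σ i := by
  apply Finset.sum_le_sum_of_subset
  intro b hb
  simp only [rowSet, Finset.mem_filter, Finset.mem_univ, true_and] at hb ⊢
  have := h (show (i, b) ∈ invSet π from ⟨hb.1, hb.2⟩)
  exact ⟨hb.1, this.2⟩

lemma rowVal_reflect {n : ℕ} {π σ : Equiv.Perm (Fin n)} (h : ¬ weakLE π σ) :
    ∃ i : Fin n, i.val + 1 < n ∧ rowVal σ i < rowVal π i := by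
  classical
  rw [weakLE, Set.not_subset] at h
  obtain ⟨p, hpI, hpJ⟩ := h
  set D : Finset (Fin n × Fin n) :=
    Finset.univ.filter (fun q => q.1 < q.2 ∧ π q.2 < π q.1 ∧ ¬ σ q.2 < σ q.1) with hD
  have hpD : p ∈ D := by
    simp only [hD, Finset.mem_filter, Finset.mem_univ, true_and]
    obtain ⟨h1, h2⟩ := hpI
    exact ⟨h1, h2, fun hc => hpJ ⟨h1, hc⟩⟩
  obtain ⟨⟨i, j⟩, hqD, hmax⟩ :=
    D.exists_max_image (fun q => q.1.val * n + (n - 1 - q.2.val)) ⟨p, hpD⟩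
  simp only [hD, Finset.mem_filter, Finset.mem_univ, true_and] at hqD
  obtain ⟨hij, hπji, hσ⟩ := hqD
  have hn0 : 0 < n := i.pos
  have hijv : i.val < j.val := hij
  have hi1 : i.val + 1 < n := by have := j.isLt; omega
  have hσij : σ i < σ j := by
    rcases lt_or_eq_of_le (not_lt.mp hσ) with h' | h'
    · exact h'
    · exact absurd (σ.injective h') (by intro hh; rw [hh] at hijv; omega)
  refine ⟨i, hi1, ?_⟩
  -- any element of row i of σ that is not in row i of π lies strictly beyond j
  have claim : ∀ b : Fin n, b ∈ rowSet σ i → b ∉ rowSet π i → j < b := by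
    intro b hbσ hbπ
    simp only [rowSet, Finset.mem_filter, Finset.mem_univ, true_and] at hbσ hbπ
    obtain ⟨hib, hσb⟩ := hbσ
    have hπib : π i < π b := by
      have h1 : ¬ π b < π i := fun hc => hbπ ⟨hib, hc⟩
      rcases lt_or_eq_of_le (not_lt.mp h1) with h' | h'
      · exact h'
      · exact absurd (π.injective h') (by
          intro hh; rw [hh] at hib; exact lt_irrefl _ hib)
    have hbj : b ≠ j := by
      intro hh; rw [hh] at hσb; exact hσ hσb
    have hnotlt : ¬ b < j := by
      intro hblt
      have hq' : (b, j) ∈ D := by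
        simp only [hD, Finset.mem_filter, Finset.mem_univ, true_and]
        refine ⟨hblt, lt_trans hπji hπib, ?_⟩
        exact not_lt.mpr (le_of_lt (lt_trans hσb hσij))
      have hkey := hmax (b, j) hq'
      simp only at hkey
      have hbn : b.val * n ≤ i.val * n := by omega
      have := Nat.le_of_mul_le_mul_right hbn hn0
      have : i.val < b.val := hib
      omega
    have : j ≤ b := not_lt.mp hnotlt
    exact lt_of_le_of_ne this (Ne.symm hbj)
  have hjA : j ∈ rowSet π i := by
    simp only [rowSet, Finset.mem_filter, Finset.mem_univ, true_and]
    exact ⟨hij, hπji⟩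
  have hjB : j ∉ rowSet σ i := by
    simp only [rowSet, Finset.mem_filter, Finset.mem_univ, true_and]
    intro hh; exact hσ hh.2
  set A := rowSet π i
  set B := rowSet σ i
  -- bound the contribution of B \ A
  have bound1 : ∑ b ∈ B \ A, 4 ^ (n - 1 - b.val) < 4 ^ (n - 1 - j.val) := by
    have hsub : B \ A ⊆ Finset.univ.filter (fun b : Fin n => j < b) := by
      intro b hb
      rw [Finset.mem_sdiff] at hb
      simp only [Finset.mem_filter, Finset.mem_univ, true_and]
      exact claim b hb.1 hb.2
    calc ∑ b ∈ B \ A, 4 ^ (n - 1 - b.val)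
        ≤ ∑ b ∈ Finset.univ.filter (fun b : Fin n => j < b), 4 ^ (n - 1 - b.val) :=
          Finset.sum_le_sum_of_subset hsub
      _ = ∑ t ∈ (Finset.univ.filter (fun b : Fin n => j < b)).image
            (fun b : Fin n => n - 1 - b.val), 4 ^ t := by
          rw [Finset.sum_image]
          intro x _ y _ hxy
          have hx := x.isLt
          have hy := y.isLt
          exact Fin.ext (by simp only at hxy; omega)
      _ ≤ ∑ t ∈ Finset.range (n - 1 - j.val), 4 ^ t := by
          apply Finset.sum_le_sum_of_subset
          intro t ht
          rw [Finset.mem_image] at ht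
          obtain ⟨b, hb, rfl⟩ := ht
          simp only [Finset.mem_filter, Finset.mem_univ, true_and] at hb
          rw [Finset.mem_range]
          have h1 : j.val < b.val := hb
          have h2 := b.isLt
          omega
      _ < 4 ^ (n - 1 - j.val) := geom4 _
  have hjBA : j ∉ B ∩ A := by
    rw [Finset.mem_inter]; intro hh; exact hjB hh.1
  calc rowVal σ i = ∑ b ∈ B ∩ A, 4 ^ (n - 1 - b.val) + ∑ b ∈ B \ A, 4 ^ (n - 1 - b.val) :=
        (Finset.sum_inter_add_sum_sdiff B A _).symm
    _ < ∑ b ∈ B ∩ A, 4 ^ (n - 1 - b.val) + 4 ^ (n - 1 - j.val) := by omega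
    _ = ∑ b ∈ insert j (B ∩ A), 4 ^ (n - 1 - b.val) := by
        rw [Finset.sum_insert hjBA]; ring
    _ ≤ ∑ b ∈ A, 4 ^ (n - 1 - b.val) := by
        apply Finset.sum_le_sum_of_subset
        intro b hb
        rcases Finset.mem_insert.mp hb with rfl | hb'
        · exact hjA
        · exact (Finset.mem_inter.mp hb').2
    _ = rowVal π i := rfl

/-! ### Lower bound gadgets: adjacent transpositions and their complements -/

private def pa {n : ℕ} (hn : 2 ≤ n) (m : Fin (n - 1)) : Fin n :=
  ⟨m.val, by have := m.isLt; omega⟩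

private def pb {n : ℕ} (hn : 2 ≤ n) (m : Fin (n - 1)) : Fin n :=
  ⟨m.val + 1, by have := m.isLt; omega⟩

private lemma swap_val {n : ℕ} (hn : 2 ≤ n) (m : Fin (n - 1)) (z : Fin n) :
    ((Equiv.swap (pa hn m) (pb hn m)) z).val =
      if z.val = m.val then m.val + 1 else if z.val = m.val + 1 then m.val else z.val := by
  rw [Equiv.swap_apply_def]
  split_ifs with h1 h2 <;> simp_all [pa, pb, Fin.ext_iff]

/-- **Theorem (Reading, Theorem 1, type A).** For `n ≥ 2`, the order dimension of the weak
order on the symmetric group `Sₙ` equals `n − 1`: the least `d` such that the weak order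
embeds as an induced subposet of ℝᵈ with the componentwise order is `n − 1`. -/
theorem orderDim_weakOrder_symmetricGroup (n : ℕ) (hn : 2 ≤ n) :
    sInf {d : ℕ | ∃ f : Equiv.Perm (Fin n) → (Fin d → ℝ),
      ∀ π σ : Equiv.Perm (Fin n), weakLE π σ ↔ ∀ i, f π i ≤ f σ i} = n - 1 := by
  classical
  set S := {d : ℕ | ∃ f : Equiv.Perm (Fin n) → (Fin d → ℝ),
      ∀ π σ : Equiv.Perm (Fin n), weakLE π σ ↔ ∀ i, f π i ≤ f σ i} with hS
  -- Membership: n - 1 realizes the weak order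
  have hmem : n - 1 ∈ S := by
    refine ⟨fun π k => ((rowVal π ⟨k.val, lt_of_lt_of_le k.isLt (Nat.sub_le n 1)⟩ : ℕ) : ℝ), ?_⟩
    intro π σ
    constructor
    · intro h k
      show ((rowVal π ⟨k.val, lt_of_lt_of_le k.isLt (Nat.sub_le n 1)⟩ : ℕ) : ℝ) ≤
        ((rowVal σ ⟨k.val, lt_of_lt_of_le k.isLt (Nat.sub_le n 1)⟩ : ℕ) : ℝ)
      exact_mod_cast rowVal_mono h _
    · intro h
      by_contra hc
      obtain ⟨i, hi, hlt⟩ := rowVal_reflect hc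
      have hkey : ((rowVal π i : ℕ) : ℝ) ≤ ((rowVal σ i : ℕ) : ℝ) := h ⟨i.val, by omega⟩
      exact absurd hkey (by exact_mod_cast not_le.mpr hlt)
  -- Lower bound
  have hlb : ∀ d ∈ S, n - 1 ≤ d := by
    rintro d ⟨f, hf⟩
    by_contra hd
    push_neg at hd
    set a : Fin (n - 1) → Equiv.Perm (Fin n) := fun m => Equiv.swap (pa hn m) (pb hn m) with ha
    set b : Fin (n - 1) → Equiv.Perm (Fin n) := fun m => (a m).trans Fin.revPerm with hb
    have hpapb : ∀ m : Fin (n - 1), pa hn m < pb hn m := by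
      intro m; exact Fin.mk_lt_mk.mpr (by omega)
    have F1 : ∀ m : Fin (n - 1), (pa hn m, pb hn m) ∈ invSet (a m) := by
      intro m
      refine ⟨hpapb m, ?_⟩
      show (a m) (pb hn m) < (a m) (pa hn m)
      rw [ha]
      simp only [Equiv.swap_apply_left, Equiv.swap_apply_right]
      exact hpapb m
    have F2 : ∀ m : Fin (n - 1), (pa hn m, pb hn m) ∉ invSet (b m) := by
      intro m hcon
      have h2 := hcon.2
      simp only [hb, Equiv.trans_apply, Fin.revPerm_apply] at h2
      rw [Fin.rev_lt_rev] at h2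
      simp only [ha, Equiv.swap_apply_left, Equiv.swap_apply_right] at h2
      exact absurd h2 (not_lt.mpr (le_of_lt (hpapb m)))
    have F3 : ∀ (m : Fin (n - 1)) (p : Fin n × Fin n),
        p ∈ invSet (a m) → p = (pa hn m, pb hn m) := by
      rintro m ⟨x, y⟩ ⟨hxy, hinv⟩
      have hxyv : x.val < y.val := hxy
      have hinvv : ((a m) y).val < ((a m) x).val := hinv
      rw [ha, swap_val hn m x, swap_val hn m y] at hinvv
      have hvals : x.val = m.val ∧ y.val = m.val + 1 := by
        split_ifs at hinvv <;> omega
      have hx : x = pa hn m := Fin.ext hvals.1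
      have hy : y = pb hn m := Fin.ext hvals.2
      rw [hx, hy]
    have F4 : ∀ m l : Fin (n - 1), m ≠ l → (pa hn m, pb hn m) ∈ invSet (b l) := by
      intro m l hml
      refine ⟨hpapb m, ?_⟩
      show (b l) (pb hn m) < (b l) (pa hn m)
      simp only [hb, Equiv.trans_apply, Fin.revPerm_apply]
      rw [Fin.rev_lt_rev]
      have hv : ((a l) (pa hn m)).val < ((a l) (pb hn m)).val := by
        rw [ha, swap_val hn l (pa hn m), swap_val hn l (pb hn m)]
        have hmlv : m.val ≠ l.val := fun h => hml (Fin.ext h)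
        simp only [pa, pb]
        show (if m.val = l.val then l.val + 1 else if m.val = l.val + 1 then l.val else m.val) < (if m.val + 1 = l.val then l.val + 1 else if m.val + 1 = l.val + 1 then l.val else m.val + 1)
        split_ifs <;> omega
      exact hv
    -- choose a separating coordinate for each m
    have hex : ∀ m : Fin (n - 1), ∃ i : Fin d, f (b m) i < f (a m) i := by
      intro m
      have hnle : ¬ weakLE (a m) (b m) := fun h => F2 m (h (F1 m))
      have : ¬ ∀ i, f (a m) i ≤ f (b m) i := fun h => hnle ((hf _ _).mpr h)
      push_neg at this
      exact this
    choose c hc using hex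
    obtain ⟨m, l, hml, hcl⟩ := Fintype.exists_ne_map_eq_of_card_lt c (by
      simp only [Fintype.card_fin]; omega)
    have hml1 : weakLE (a m) (b l) := by
      intro p hp
      rw [F3 m p hp]
      exact F4 m l hml
    have hml2 : weakLE (a l) (b m) := by
      intro p hp
      rw [F3 l p hp]
      exact F4 l m (Ne.symm hml)
    have k1 := (hf (a m) (b l)).mp hml1 (c m)
    have k2 := (hf (a l) (b m)).mp hml2 (c l)
    have h1 := hc m
    have h2 := hc l
    rw [hcl] at k1 h1
    linarith
  exact le_antisymm (Nat.sInf_le hmem) (le_csInf ⟨_, hmem⟩ hlb)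
end
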